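/- Every element of GL_n(q) is conjugate to its inverse in the group GL_n(q)⟨τ⟩, where τ is the transpose-inverse automorphism x ↦ (x^T)^{-1}. -/

import Mathlib

open Matrix

/-- The transpose-inverse automorphism `τ : x ↦ (xᵀ)⁻¹` on the units of the matrix
ring, i.e. on `GL_n`. -/
def transposeInv {n : ℕ} {F : Type*} [Field F]
    (x : (Matrix (Fin n) (Fin n) F)ˣ) : (Matrix (Fin n) (Fin n) F)ˣ where
  val := Matrix.transpose ((x⁻¹ : (Matrix (Fin n) (Fin n) F)ˣ) : Matrix (Fin n) (Fin n) F)
  inv := Matrix.transpose ((x : Matrix (Fin n) (Fin n) F))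
  val_inv := by
    rw [← Matrix.transpose_mul, Units.mul_inv, Matrix.transpose_one]
  inv_val := by
    rw [← Matrix.transpose_mul, Units.inv_mul, Matrix.transpose_one]

section aux

open Polynomial DirectSum
open scoped DirectSum


variable {F : Type*} [Field F]

noncomputable def lamAR {g : F[X]} (hg : g.Monic) : AdjoinRoot g →ₗ[F] F :=
  (Polynomial.lcoeff F (g.natDegree - 1)).comp (AdjoinRoot.modByMonicHom hg)

lemma lamAR_pair {g : F[X]} (hg : g.Monic) (u : AdjoinRoot g) (hu : u ≠ 0) :
    ∃ c : AdjoinRoot g, lamAR hg (u * c) ≠ 0 := by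
  set r := AdjoinRoot.modByMonicHom hg u with hr
  have hmk : AdjoinRoot.mk g r = u := AdjoinRoot.mk_leftInverse hg u
  have hrne : r ≠ 0 := by
    intro h
    rw [h, map_zero] at hmk
    exact hu hmk.symm
  have hdeg : r.degree < g.degree := by
    obtain ⟨f, rfl⟩ := AdjoinRoot.mk_surjective (g := g) u
    rw [hr, AdjoinRoot.modByMonicHom_mk]
    exact Polynomial.degree_modByMonic_lt f hg
  have hgne : g ≠ 0 := hg.ne_zero
  have hk : r.natDegree < g.natDegree := by
    have := Polynomial.natDegree_lt_natDegree hrne hdeg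
    exact this
  set d := g.natDegree with hd
  set k := r.natDegree with hkdef
  have hk1 : k ≤ d - 1 := Nat.le_pred_of_lt hk
  refine ⟨AdjoinRoot.mk g (X ^ (d - 1 - k)), ?_⟩
  have humul : u * AdjoinRoot.mk g (X ^ (d - 1 - k)) = AdjoinRoot.mk g (r * X ^ (d - 1 - k)) := by
    rw [← hmk, ← _root_.map_mul]
  rw [humul]
  have hprodne : r * X ^ (d - 1 - k) ≠ 0 := mul_ne_zero hrne (pow_ne_zero _ X_ne_zero)
  have hdeg2 : (r * X ^ (d - 1 - k)).degree < g.degree := by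
    rw [Polynomial.degree_mul, Polynomial.degree_X_pow]
    rw [Polynomial.degree_eq_natDegree hrne]
    rw [Polynomial.degree_eq_natDegree hgne]
    rw [← Nat.cast_add]
    exact_mod_cast (by omega : k + (d - 1 - k) < d)
  have hmod : (r * X ^ (d - 1 - k)) %ₘ g = r * X ^ (d - 1 - k) :=
    (Polynomial.modByMonic_eq_self_iff hg).mpr hdeg2
  rw [lamAR, LinearMap.comp_apply, AdjoinRoot.modByMonicHom_mk, hmod]
  have hcoeff : (r * X ^ (d - 1 - k)).coeff (d - 1) = r.coeff k := by
    set m := d - 1 - k with hm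
    have hdk : d - 1 = k + m := by omega
    rw [hdk, Polynomial.coeff_mul_X_pow]
  simp only [lcoeff_apply, ← hd, hcoeff]
  exact fun h => hrne (Polynomial.leadingCoeff_eq_zero.mp h)

section setup
variable {n : ℕ} [Fintype F] (A : Matrix (Fin n) (Fin n) F)

noncomputable abbrev phi : Module.End F (Fin n → F) := Matrix.mulVecLin A

lemma aeval_torsion : Module.IsTorsion F[X] (Module.AEval' (phi A)) := by
  intro x
  haveI : Finite (Module.AEval' (phi A)) := inferInstanceAs (Finite (Fin n → F))
  obtain ⟨a, b, hab, h⟩ :=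
    Finite.exists_ne_map_eq_of_infinite (fun k : ℕ => (X ^ k : F[X]) • x)
  refine ⟨⟨X ^ a - X ^ b, mem_nonZeroDivisors_of_ne_zero ?_⟩, by
    simp only [Submonoid.mk_smul, sub_smul, h, sub_self]⟩
  intro hz
  rw [sub_eq_zero] at hz
  exact hab (by simpa [Polynomial.natDegree_X_pow] using congrArg natDegree hz)

set_option maxHeartbeats 1000000 in
theorem exists_unit_conj_transpose :
    ∃ S : Matrix (Fin n) (Fin n) F, IsUnit S ∧ Aᵀ * S = S * A := by
  classical
  obtain ⟨ι, fι, p, hp, e, ⟨ε⟩⟩ := Module.equiv_directSum_of_isTorsion (aeval_torsion A)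
  have hf : ∀ i, (p i ^ e i) ≠ 0 := fun i => pow_ne_zero _ (hp i).ne_zero
  set g : ι → F[X] := fun i => (p i ^ e i) * C ((p i ^ e i).leadingCoeff)⁻¹ with hgdef
  have hg : ∀ i, (g i).Monic := fun i => monic_mul_leadingCoeff_inv (hf i)
  have hspan : ∀ i, (F[X] ∙ p i ^ e i) = Ideal.span {g i} := by
    intro i
    have hlc : (p i ^ e i).leadingCoeff ≠ 0 := leadingCoeff_ne_zero.mpr (hf i)
    have hu : IsUnit (C ((p i ^ e i).leadingCoeff)) :=
      Polynomial.isUnit_C.mpr (isUnit_iff_ne_zero.mpr hlc)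
    refine (Ideal.span_singleton_eq_span_singleton.mpr ⟨hu.unit, ?_⟩).symm
    rw [IsUnit.unit_spec, hgdef]
    rw [mul_assoc, ← C_mul, inv_mul_cancel₀ hlc, C_1, mul_one]
  set qalg : ∀ i, (F[X] ⧸ (F[X] ∙ p i ^ e i)) ≃ₐ[F] AdjoinRoot (g i) :=
    fun i => Ideal.quotientEquivAlgOfEq F (hspan i) with hqalg
  set Λ : ∀ i, (F[X] ⧸ (F[X] ∙ p i ^ e i)) →ₗ[F] F :=
    fun i => (lamAR (hg i)).comp (qalg i).toLinearMap with hΛ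
  set E : (Fin n → F) ≃ₗ[F] ⨁ i, F[X] ⧸ (F[X] ∙ p i ^ e i) :=
    (Module.AEval.of F (Fin n → F) (phi A)).trans (ε.restrictScalars F) with hE
  -- smul lemmas on quotients
  have hsm : ∀ (i) (r : F[X]) (z : F[X] ⧸ (F[X] ∙ p i ^ e i)),
      r • z = Ideal.Quotient.mk _ r * z := by
    intro i r z
    obtain ⟨y, rfl⟩ := Submodule.Quotient.mk_surjective _ z
    rw [← Submodule.Quotient.mk_smul, smul_eq_mul]
    rfl
  have hsmF : ∀ (i) (a : F) (z : F[X] ⧸ (F[X] ∙ p i ^ e i)),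
      a • z = Ideal.Quotient.mk _ (C a) * z := by
    intro i a z
    obtain ⟨y, rfl⟩ := Submodule.Quotient.mk_surjective _ z
    rw [← Submodule.Quotient.mk_smul, Polynomial.smul_eq_C_mul]
    exact (hsm i (C a) (Submodule.Quotient.mk y)).symm ▸ (hsm i (C a) _ ▸ rfl)
  -- the bilinear form
  set Bf : (Fin n → F) → (Fin n → F) → F :=
    fun v w => ∑ i, Λ i (E v i * E w i) with hBf
  have hBadd1 : ∀ v v' w, Bf (v + v') w = Bf v w + Bf v' w := by
    intro v v' w
    simp only [hBf, map_add, DirectSum.add_apply, add_mul, map_add, Finset.sum_add_distrib]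
  have hBadd2 : ∀ v w w', Bf v (w + w') = Bf v w + Bf v w' := by
    intro v w w'
    simp only [hBf, map_add, DirectSum.add_apply, mul_add, map_add, Finset.sum_add_distrib]
  have hBsm1 : ∀ (a : F) v w, Bf (a • v) w = a * Bf v w := by
    intro a v w
    simp only [hBf, _root_.map_smul, Finset.mul_sum]
    refine Finset.sum_congr rfl fun i _ => ?_
    rw [DirectSum.smul_apply, hsmF i a (E v i), mul_assoc, ← hsmF i a (E v i * E w i),
      _root_.map_smul, smul_eq_mul]
  have hBsm2 : ∀ (a : F) v w, Bf v (a • w) = a * Bf v w := by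
    intro a v w
    simp only [hBf, _root_.map_smul, Finset.mul_sum]
    refine Finset.sum_congr rfl fun i _ => ?_
    rw [DirectSum.smul_apply, hsmF i a (E w i), mul_left_comm,
      ← hsmF i a (E v i * E w i), _root_.map_smul, smul_eq_mul]
  set B : (Fin n → F) →ₗ[F] (Fin n → F) →ₗ[F] F :=
    LinearMap.mk₂ F Bf hBadd1 hBsm1 hBadd2 hBsm2 with hB
  -- self-adjointness
  have hEX : ∀ v, E (A *ᵥ v) = (X : F[X]) • E v := by
    intro v
    have h1 : (Module.AEval.of F (Fin n → F) (phi A)) (A *ᵥ v)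
        = (X : F[X]) • (Module.AEval.of F (Fin n → F) (phi A)) v :=
      (Module.AEval.X_smul_of _ v).symm
    calc E (A *ᵥ v) = ε ((Module.AEval.of F (Fin n → F) (phi A)) (A *ᵥ v)) := rfl
      _ = ε ((X : F[X]) • (Module.AEval.of F (Fin n → F) (phi A)) v) := by rw [h1]
      _ = (X : F[X]) • ε ((Module.AEval.of F (Fin n → F) (phi A)) v) := _root_.map_smul ε _ _
      _ = (X : F[X]) • E v := rfl
  have hadj : ∀ v w, Bf (A *ᵥ v) w = Bf v (A *ᵥ w) := by
    intro v w
    simp only [hBf, hEX]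
    refine Finset.sum_congr rfl fun i _ => ?_
    rw [DirectSum.smul_apply, DirectSum.smul_apply, hsm i X (E v i), hsm i X (E w i),
      mul_left_comm]
    ring_nf
  set S := LinearMap.toMatrix₂' F B with hS
  have hBS : ∀ v w, Bf v w = v ⬝ᵥ S *ᵥ w := by
    intro v w
    calc Bf v w = B v w := rfl
    _ = (Matrix.toLinearMap₂' F S) v w := by rw [hS, Matrix.toLinearMap₂'_toMatrix']
    _ = v ⬝ᵥ S *ᵥ w := Matrix.toLinearMap₂'_apply' _ _ _
  have hnd : ∀ v, (∀ w, v ⬝ᵥ S *ᵥ w = 0) → v = 0 := by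
    intro v hv
    by_contra hvne
    have hEv : E v ≠ 0 := fun h => hvne (by simpa using congrArg E.symm h)
    have : ∃ i, E v i ≠ 0 := by
      by_contra h
      push_neg at h
      exact hEv (DFinsupp.ext h)
    obtain ⟨i, hui⟩ := this
    have hu' : qalg i (E v i) ≠ 0 := fun h => hui ((map_eq_zero_iff _ (AlgEquiv.injective _)).mp h)
    obtain ⟨c', hc'⟩ := lamAR_pair (hg i) _ hu'
    set c := (qalg i).symm c' with hc
    set w := E.symm (DirectSum.of _ i c) with hw
    have hBvw : Bf v w
        = Λ i ((E v) i * (DirectSum.of (fun j => F[X] ⧸ (F[X] ∙ p j ^ e j)) i c) i) := by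
      simp only [hBf, hw, LinearEquiv.apply_symm_apply]
      refine Finset.sum_eq_single i (fun j _ hj => ?_) (fun h => absurd (Finset.mem_univ i) h)
      rw [DirectSum.of_eq_of_ne _ _ _ hj, mul_zero, map_zero]
    rw [DirectSum.of_eq_same] at hBvw
    have : Λ i (E v i * c) ≠ 0 := by
      rw [hΛ]
      simp only [LinearMap.comp_apply, AlgEquiv.toLinearMap_apply, _root_.map_mul, hc,
        AlgEquiv.apply_symm_apply]
      exact hc'
    exact this (by rw [← hBvw, hBS]; exact hv w)
  have hSunit : IsUnit S := by
    refine Matrix.vecMul_injective_iff_isUnit.mp ?_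
    intro v v' h
    have h' : v ᵥ* S = v' ᵥ* S := h
    have hz : ∀ w, (v - v') ⬝ᵥ S *ᵥ w = 0 := by
      intro w
      rw [Matrix.dotProduct_mulVec, Matrix.sub_vecMul, h', sub_self, zero_dotProduct]
    have := hnd (v - v') hz
    exact sub_eq_zero.mp this
  refine ⟨S, hSunit, ?_⟩
  have hcomp : B.comp (Matrix.toLin' A) = B.compl₂ (Matrix.toLin' A) := by
    refine LinearMap.ext fun v => LinearMap.ext fun w => ?_
    simp only [LinearMap.comp_apply, LinearMap.compl₂_apply, Matrix.toLin'_apply]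
    exact hadj v w
  calc Aᵀ * S = (LinearMap.toMatrix' (Matrix.toLin' A))ᵀ * LinearMap.toMatrix₂' F B := by
        rw [LinearMap.toMatrix'_toLin', hS]
      _ = LinearMap.toMatrix₂' F (B.comp (Matrix.toLin' A)) := (LinearMap.toMatrix₂'_comp _ _).symm
      _ = LinearMap.toMatrix₂' F (B.compl₂ (Matrix.toLin' A)) := by rw [hcomp]
      _ = LinearMap.toMatrix₂' F B * LinearMap.toMatrix' (Matrix.toLin' A) :=
        LinearMap.toMatrix₂'_compl₂ _ _
      _ = S * A := by rw [LinearMap.toMatrix'_toLin', hS]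
end setup

end aux


/-- Every element `x` of `GL_n(q)` (`n ≥ 2`, `q` a finite field) is
conjugate to its inverse in `GL_n(q)⟨τ⟩`, where `τ` is the transpose-inverse
automorphism: there is `g ∈ GL_n(q)` with `g x g⁻¹ = x⁻¹` or `g τ(x) g⁻¹ = x⁻¹`
(the latter being conjugation of `x` by the element `gτ` of the extension). -/
theorem stmt9 {n : ℕ} (hn : 2 ≤ n) (F : Type*) [Field F] [Fintype F]
    (x : (Matrix (Fin n) (Fin n) F)ˣ) :
    ∃ g : (Matrix (Fin n) (Fin n) F)ˣ,
      g * x * g⁻¹ = x⁻¹ ∨ g * transposeInv x * g⁻¹ = x⁻¹ := by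
  obtain ⟨S, hS, hc⟩ :=
    exists_unit_conj_transpose ((x⁻¹ : (Matrix (Fin n) (Fin n) F)ˣ) : Matrix (Fin n) (Fin n) F)
  refine ⟨hS.unit⁻¹, Or.inr ?_⟩
  have key : (↑hS.unit⁻¹ : Matrix (Fin n) (Fin n) F) *
      ((x⁻¹ : (Matrix (Fin n) (Fin n) F)ˣ) : Matrix (Fin n) (Fin n) F)ᵀ * (↑hS.unit : Matrix (Fin n) (Fin n) F)
      = ((x⁻¹ : (Matrix (Fin n) (Fin n) F)ˣ) : Matrix (Fin n) (Fin n) F) := by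
    calc (↑hS.unit⁻¹ : Matrix (Fin n) (Fin n) F) * (_)ᵀ * (↑hS.unit : Matrix (Fin n) (Fin n) F)
        = ↑hS.unit⁻¹ * ((((x⁻¹ : (Matrix (Fin n) (Fin n) F)ˣ) : Matrix (Fin n) (Fin n) F))ᵀ * S) :=
          by rw [mul_assoc, hS.unit_spec]
      _ = ↑hS.unit⁻¹ * (S * ((x⁻¹ : (Matrix (Fin n) (Fin n) F)ˣ) : Matrix (Fin n) (Fin n) F)) :=
          by rw [hc]
      _ = (↑hS.unit⁻¹ * ↑hS.unit) * ((x⁻¹ : (Matrix (Fin n) (Fin n) F)ˣ) : Matrix (Fin n) (Fin n) F) :=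
          by rw [← mul_assoc, hS.unit_spec]
      _ = ((x⁻¹ : (Matrix (Fin n) (Fin n) F)ˣ) : Matrix (Fin n) (Fin n) F) :=
          by rw [Units.inv_mul, one_mul]
  apply Units.ext
  simpa [transposeInv, Units.val_mul, inv_inv, mul_assoc] using key
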